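/- Let E be a semisimple F-linear bicategory (a Morita context) with two objects A, B, simple units 1_A, 1_B, and mutually dual 1-morphisms J : B → A, J̄ : A → B with d(J) = d(J̄) ≠ 0, such that finitely many isomorphism classes of simple 1-morphisms exist and each simple 1-morphism of each of the four hom-categories appears as a retract of an alternating composite of J and J̄. Then Σ_i d(X_i)² = Σ_k d(Y_k)², where {X_i} are representatives of the simple objects of END_E(A) and {Y_k} representatives of the simple 1-morphisms in Hom_E(B,A); in particular dim END_E(A) = dim END_E(B). -/

import Mathlib

open CategoryTheory Bicategory

section Zig
variable {B : Type*} [Bicategory B] {a b c : B}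
variable (J : b ⟶ a) (Jbar : a ⟶ b)
variable (eps : 𝟙 b ⟶ J ≫ Jbar) (η : Jbar ≫ J ⟶ 𝟙 a)

lemma my_psi_phi
    (zag₁ : (λ_ J).inv ≫ (eps ▷ J) ≫ (α_ J Jbar J).hom ≫ (J ◁ η) ≫ (ρ_ J).hom = 𝟙 J)
    {Y : b ⟶ c} {X : a ⟶ c} (f : Y ⟶ J ≫ X) :
    (λ_ Y).inv ≫ (eps ▷ Y) ≫ (α_ J Jbar Y).hom ≫
      (J ◁ ((Jbar ◁ f) ≫ (α_ Jbar J X).inv ≫ (η ▷ X) ≫ (λ_ X).hom)) = f := by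
  have key : (λ_ (J ≫ X)).inv ≫ (eps ▷ (J ≫ X)) ≫ (α_ J Jbar (J ≫ X)).hom ≫
      (J ◁ (α_ Jbar J X).inv) ≫ (J ◁ (η ▷ X)) ≫ (J ◁ (λ_ X).hom)
      = ((λ_ J).inv ≫ (eps ▷ J) ≫ (α_ J Jbar J).hom ≫ (J ◁ η) ≫ (ρ_ J).hom) ▷ X := by
    bicategory
  calc (λ_ Y).inv ≫ (eps ▷ Y) ≫ (α_ J Jbar Y).hom ≫
      (J ◁ ((Jbar ◁ f) ≫ (α_ Jbar J X).inv ≫ (η ▷ X) ≫ (λ_ X).hom))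
      = (λ_ Y).inv ≫ (eps ▷ Y) ≫ ((J ≫ Jbar) ◁ f) ≫ (α_ J Jbar (J ≫ X)).hom ≫
        (J ◁ (α_ Jbar J X).inv) ≫ (J ◁ (η ▷ X)) ≫ (J ◁ (λ_ X).hom) := by
        simp only [Bicategory.whiskerLeft_comp, Category.assoc,
          associator_naturality_right_assoc]
      _ = (λ_ Y).inv ≫ (𝟙 b ◁ f) ≫ (eps ▷ (J ≫ X)) ≫ (α_ J Jbar (J ≫ X)).hom ≫
        (J ◁ (α_ Jbar J X).inv) ≫ (J ◁ (η ▷ X)) ≫ (J ◁ (λ_ X).hom) := by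
        rw [← whisker_exchange_assoc]
      _ = f ≫ (λ_ (J ≫ X)).inv ≫ (eps ▷ (J ≫ X)) ≫ (α_ J Jbar (J ≫ X)).hom ≫
        (J ◁ (α_ Jbar J X).inv) ≫ (J ◁ (η ▷ X)) ≫ (J ◁ (λ_ X).hom) := by
        rw [leftUnitor_inv_naturality_assoc]
      _ = f := by rw [key, zag₁]; simp

lemma my_phi_psi
    (zag₂ : (ρ_ Jbar).inv ≫ (Jbar ◁ eps) ≫ (α_ Jbar J Jbar).inv ≫ (η ▷ Jbar) ≫ (λ_ Jbar).hom
        = 𝟙 Jbar)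
    {Y : b ⟶ c} {X : a ⟶ c} (g : Jbar ≫ Y ⟶ X) :
    (Jbar ◁ ((λ_ Y).inv ≫ (eps ▷ Y) ≫ (α_ J Jbar Y).hom ≫ (J ◁ g))) ≫
      (α_ Jbar J X).inv ≫ (η ▷ X) ≫ (λ_ X).hom = g := by
  have key : (Jbar ◁ (λ_ Y).inv) ≫ (Jbar ◁ (eps ▷ Y)) ≫ (Jbar ◁ (α_ J Jbar Y).hom) ≫
      (α_ Jbar J (Jbar ≫ Y)).inv ≫ (η ▷ (Jbar ≫ Y)) ≫ (λ_ (Jbar ≫ Y)).hom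
      = ((ρ_ Jbar).inv ≫ (Jbar ◁ eps) ≫ (α_ Jbar J Jbar).inv ≫ (η ▷ Jbar) ≫ (λ_ Jbar).hom) ▷ Y := by
    bicategory
  calc (Jbar ◁ ((λ_ Y).inv ≫ (eps ▷ Y) ≫ (α_ J Jbar Y).hom ≫ (J ◁ g))) ≫
      (α_ Jbar J X).inv ≫ (η ▷ X) ≫ (λ_ X).hom
      = (Jbar ◁ (λ_ Y).inv) ≫ (Jbar ◁ (eps ▷ Y)) ≫ (Jbar ◁ (α_ J Jbar Y).hom) ≫
        (α_ Jbar J (Jbar ≫ Y)).inv ≫ ((Jbar ≫ J) ◁ g) ≫ (η ▷ X) ≫ (λ_ X).hom := by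
        simp only [Bicategory.whiskerLeft_comp, Category.assoc,
          associator_inv_naturality_right_assoc]
      _ = (Jbar ◁ (λ_ Y).inv) ≫ (Jbar ◁ (eps ▷ Y)) ≫ (Jbar ◁ (α_ J Jbar Y).hom) ≫
        (α_ Jbar J (Jbar ≫ Y)).inv ≫ (η ▷ (Jbar ≫ Y)) ≫ (𝟙 a ◁ g) ≫ (λ_ X).hom := by
        rw [whisker_exchange_assoc]
      _ = (Jbar ◁ (λ_ Y).inv) ≫ (Jbar ◁ (eps ▷ Y)) ≫ (Jbar ◁ (α_ J Jbar Y).hom) ≫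
        (α_ Jbar J (Jbar ≫ Y)).inv ≫ (η ▷ (Jbar ≫ Y)) ≫ (λ_ (Jbar ≫ Y)).hom ≫ g := by
        rw [leftUnitor_naturality]
      _ = g := by rw [reassoc_of% key, zag₂]; simp

end Zig

section Lin
variable {F : Type*} [Field F] {C : Type*} [Category C] [Preadditive C]
  [CategoryTheory.Linear F C]

lemma my_scalar_unique {S : C} (hS : 𝟙 S ≠ 0) {x y : F} (h : x • 𝟙 S = y • 𝟙 S) : x = y := by
  by_contra hne
  have h0 : (x - y) • 𝟙 S = 0 := by rw [sub_smul, h, sub_self]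
  have : 𝟙 S = 0 := by
    have := congrArg (fun z => (x - y)⁻¹ • z) h0
    simpa [smul_smul, inv_mul_cancel₀ (sub_ne_zero.mpr hne)] using this
  exact hS this

lemma hom_from_simple {n : ℕ} (Y : Fin n → C) (k : Fin n)
    (hsimple : ∀ (f : Y k ⟶ Y k), ∃ c : F, f = c • 𝟙 (Y k))
    (hdisj : ∀ l, k ≠ l → ∀ f : Y k ⟶ Y l, f = 0)
    (hk : 𝟙 (Y k) ≠ 0)
    (Z : C) (N : ℕ) (c : Fin N → Fin n)
    (u : ∀ p, Y (c p) ⟶ Z) (u' : ∀ p, Z ⟶ Y (c p))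
    (hsum : (∑ p, u' p ≫ u p) = 𝟙 Z) (hid : ∀ p, u p ≫ u' p = 𝟙 (Y (c p)))
    (horth : ∀ p q, p ≠ q → u p ≫ u' q = 0) :
    Nonempty ((Y k ⟶ Z) ≃ₗ[F] ({p : Fin N // c p = k} → F)) := by
  choose σ hσ using hsimple
  have hσ_eq : ∀ (f : Y k ⟶ Y k) (x : F), f = x • 𝟙 (Y k) → σ f = x := by
    intro f x hx
    exact my_scalar_unique hk ((hσ f).symm.trans hx)
  refine ⟨{
    toFun := fun f x => σ (f ≫ u' x.1 ≫ eqToHom (congrArg Y x.2)),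
    map_add' := ?_, map_smul' := ?_,
    invFun := fun g => ∑ x : {p : Fin N // c p = k},
      g x • (eqToHom (congrArg Y x.2.symm) ≫ u x.1),
    left_inv := ?_, right_inv := ?_ }⟩
  · intro f g
    funext x
    simp only [Pi.add_apply]
    apply hσ_eq
    rw [Preadditive.add_comp, add_smul, ← hσ, ← hσ]
  · intro t f
    funext x
    simp only [Pi.smul_apply, smul_eq_mul, RingHom.id_apply]
    apply hσ_eq
    rw [CategoryTheory.Linear.smul_comp, mul_smul, ← hσ]
  · intro f
    dsimp only
    have hterm : ∀ x : {p : Fin N // c p = k},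
        σ (f ≫ u' x.1 ≫ eqToHom (congrArg Y x.2)) •
          (eqToHom (congrArg Y x.2.symm) ≫ u x.1) = f ≫ u' x.1 ≫ u x.1 := by
      intro x
      have h1 : f ≫ u' x.1 ≫ eqToHom (congrArg Y x.2)
          = σ (f ≫ u' x.1 ≫ eqToHom (congrArg Y x.2)) • 𝟙 (Y k) := hσ _
      have h2 : f ≫ u' x.1 = σ (f ≫ u' x.1 ≫ eqToHom (congrArg Y x.2)) •
          eqToHom (congrArg Y x.2.symm) := by
        have := congrArg (fun z => z ≫ eqToHom (congrArg Y x.2.symm)) h1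
        simpa [Category.assoc, CategoryTheory.Linear.smul_comp] using this
      conv_rhs => rw [← Category.assoc, h2]
      rw [CategoryTheory.Linear.smul_comp]
    rw [Finset.sum_congr rfl (fun x _ => hterm x)]
    have hsub : ∑ x : {p : Fin N // c p = k}, (f ≫ u' x.1 ≫ u x.1)
        = ∑ p ∈ Finset.univ.filter (fun p => c p = k), (f ≫ u' p ≫ u p) :=
      (Finset.sum_subtype (p := fun p => c p = k)
        (Finset.univ.filter (fun p => c p = k)) (by simp)
        (fun p => f ≫ u' p ≫ u p)).symm
    rw [hsub, Finset.sum_filter_of_ne, ← Preadditive.comp_sum]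
    · rw [show (∑ p, u' p ≫ u p) = 𝟙 Z from hsum, Category.comp_id]
    · intro p _ hne
      by_contra hcp
      apply hne
      rw [← Category.assoc, hdisj (c p) (fun h => hcp h.symm) (f ≫ u' p)]
      simp
  · intro g
    funext x
    obtain ⟨p, hp⟩ := x
    dsimp only
    apply hσ_eq
    rw [Preadditive.sum_comp]
    rw [Finset.sum_eq_single (⟨p, hp⟩ : {p : Fin N // c p = k})]
    · simp only [CategoryTheory.Linear.smul_comp, Category.assoc]
      rw [reassoc_of% (hid p)]
      simp
    · intro y _ hy
      have h0 : u y.1 ≫ u' p = 0 := horth y.1 p (fun h => hy (Subtype.ext h))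
      simp only [CategoryTheory.Linear.smul_comp, Category.assoc]
      rw [reassoc_of% h0]
      simp
    · intro h
      exact absurd (Finset.mem_univ _) h

end Lin

section Lin2
variable {F : Type*} [Field F] {C : Type*} [Category C] [Preadditive C]
  [CategoryTheory.Linear F C]

lemma my_scalar_unique' {S : C} (hS : 𝟙 S ≠ 0) {x y : F} (h : x • 𝟙 S = y • 𝟙 S) : x = y := by
  by_contra hne
  have h0 : (x - y) • 𝟙 S = 0 := by rw [sub_smul, h, sub_self]
  have : 𝟙 S = 0 := by
    have := congrArg (fun z => (x - y)⁻¹ • z) h0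
    simpa [smul_smul, inv_mul_cancel₀ (sub_ne_zero.mpr hne)] using this
  exact hS this

lemma hom_into_simple {n : ℕ} (X : Fin n → C) (i : Fin n)
    (hsimple : ∀ (f : X i ⟶ X i), ∃ c : F, f = c • 𝟙 (X i))
    (hdisj : ∀ l, l ≠ i → ∀ f : X l ⟶ X i, f = 0)
    (hi : 𝟙 (X i) ≠ 0)
    (Z : C) (N : ℕ) (c : Fin N → Fin n)
    (u : ∀ p, X (c p) ⟶ Z) (u' : ∀ p, Z ⟶ X (c p))
    (hsum : (∑ p, u' p ≫ u p) = 𝟙 Z) (hid : ∀ p, u p ≫ u' p = 𝟙 (X (c p)))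
    (horth : ∀ p q, p ≠ q → u p ≫ u' q = 0) :
    Nonempty ((Z ⟶ X i) ≃ₗ[F] ({p : Fin N // c p = i} → F)) := by
  choose σ hσ using hsimple
  have hσ_eq : ∀ (f : X i ⟶ X i) (x : F), f = x • 𝟙 (X i) → σ f = x := by
    intro f x hx
    exact my_scalar_unique' hi ((hσ f).symm.trans hx)
  refine ⟨{
    toFun := fun f x => σ (eqToHom (congrArg X x.2.symm) ≫ u x.1 ≫ f),
    map_add' := ?_, map_smul' := ?_,
    invFun := fun g => ∑ x : {p : Fin N // c p = i},
      g x • (u' x.1 ≫ eqToHom (congrArg X x.2)),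
    left_inv := ?_, right_inv := ?_ }⟩
  · intro f g
    funext x
    simp only [Pi.add_apply]
    apply hσ_eq
    rw [Preadditive.comp_add, Preadditive.comp_add, add_smul, ← hσ, ← hσ]
  · intro t f
    funext x
    simp only [Pi.smul_apply, smul_eq_mul, RingHom.id_apply]
    apply hσ_eq
    rw [CategoryTheory.Linear.comp_smul, CategoryTheory.Linear.comp_smul, mul_smul, ← hσ]
  · intro f
    dsimp only
    have hterm : ∀ x : {p : Fin N // c p = i},
        σ (eqToHom (congrArg X x.2.symm) ≫ u x.1 ≫ f) •
          (u' x.1 ≫ eqToHom (congrArg X x.2)) = u' x.1 ≫ u x.1 ≫ f := by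
      intro x
      have h1 : eqToHom (congrArg X x.2.symm) ≫ u x.1 ≫ f
          = σ (eqToHom (congrArg X x.2.symm) ≫ u x.1 ≫ f) • 𝟙 (X i) := hσ _
      have h2 : u x.1 ≫ f = σ (eqToHom (congrArg X x.2.symm) ≫ u x.1 ≫ f) •
          eqToHom (congrArg X x.2) := by
        have := congrArg (fun z => eqToHom (congrArg X x.2) ≫ z) h1
        simpa [CategoryTheory.Linear.comp_smul] using this
      conv_rhs => rw [h2]
      rw [CategoryTheory.Linear.comp_smul]
    rw [Finset.sum_congr rfl (fun x _ => hterm x)]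
    have hsub : ∑ x : {p : Fin N // c p = i}, (u' x.1 ≫ u x.1 ≫ f)
        = ∑ p ∈ Finset.univ.filter (fun p => c p = i), (u' p ≫ u p ≫ f) :=
      (Finset.sum_subtype (p := fun p => c p = i)
        (Finset.univ.filter (fun p => c p = i)) (by simp)
        (fun p => u' p ≫ u p ≫ f)).symm
    rw [hsub, Finset.sum_filter_of_ne]
    · simp only [← Category.assoc]
      rw [← Preadditive.sum_comp, hsum, Category.id_comp]
    · intro p _ hne
      by_contra hcp
      apply hne
      rw [hdisj (c p) hcp (u p ≫ f)]
      simp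
  · intro g
    funext x
    obtain ⟨p, hp⟩ := x
    dsimp only
    apply hσ_eq
    rw [Preadditive.comp_sum, Preadditive.comp_sum]
    rw [Finset.sum_eq_single (⟨p, hp⟩ : {p : Fin N // c p = i})]
    · simp [CategoryTheory.Linear.comp_smul, reassoc_of% (hid p)]
    · intro y _ hy
      have h0 : u p ≫ u' y.1 = 0 := horth p y.1 (fun h => hy (Subtype.ext h.symm))
      simp [CategoryTheory.Linear.comp_smul, reassoc_of% h0]
    · intro h
      exact absurd (Finset.mem_univ _) h

end Lin2

/-- In a semisimple `F`-linear Morita context (a bicategory with two objects `A`, `B`,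
simple units, mutually dual `J : B ⟶ A`, `J̄ : A ⟶ B` with `d(J) = d(J̄) ≠ 0`, a dimension
function on 1-morphisms which is additive over direct sums and multiplicative over
composition, finitely many simple 1-morphisms `{Xᵢ}` of `End(A)` and `{Y_k}` of
`Hom(B,A)` into which everything decomposes), one has `Σᵢ d(Xᵢ)² = Σ_k d(Y_k)²`. -/
theorem morita_context_equal_dimensions
    {B : Type*} [Bicategory B] {F : Type*} [Field F] {a b : B}
    [∀ (x y : B), Preadditive (x ⟶ y)] [∀ (x y : B), CategoryTheory.Linear F (x ⟶ y)]
    -- whiskering is additive and `F`-linear: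
    (hwl : ∀ {x y z : B} (f : x ⟶ y) {g h : y ⟶ z} (β γ : g ⟶ h),
      f ◁ (β + γ) = f ◁ β + f ◁ γ)
    (hwr : ∀ {x y z : B} {g h : x ⟶ y} (β γ : g ⟶ h) (f : y ⟶ z),
      (β + γ) ▷ f = β ▷ f + γ ▷ f)
    (hwl' : ∀ {x y z : B} (f : x ⟶ y) {g h : y ⟶ z} (c : F) (β : g ⟶ h),
      f ◁ (c • β) = c • (f ◁ β))
    (hwr' : ∀ {x y z : B} {g h : x ⟶ y} (c : F) (β : g ⟶ h) (f : y ⟶ z),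
      (c • β) ▷ f = c • (β ▷ f))
    -- the dimension function, multiplicative over composition and additive over
    -- direct-sum decompositions:
    (dim : ∀ {x y : B}, (x ⟶ y) → F)
    (hdmul : ∀ {x y z : B} (f : x ⟶ y) (g : y ⟶ z), dim (f ≫ g) = dim f * dim g)
    (hdadd : ∀ {x y : B} (Z : x ⟶ y) (N : ℕ) (W : Fin N → (x ⟶ y))
        (u : ∀ p, W p ⟶ Z) (u' : ∀ p, Z ⟶ W p),
        (∑ p, u' p ≫ u p) = 𝟙 Z → (∀ p, u p ≫ u' p = 𝟙 (W p)) →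
        (∀ p q, p ≠ q → u p ≫ u' q = 0) → dim Z = ∑ p, dim (W p))
    -- the mutually dual 1-morphisms `J`, `J̄`:
    (J : b ⟶ a) (Jbar : a ⟶ b)
    (e : 𝟙 a ⟶ Jbar ≫ J) (d₂ : J ≫ Jbar ⟶ 𝟙 b)
    (eps : 𝟙 b ⟶ J ≫ Jbar) (η : Jbar ≫ J ⟶ 𝟙 a)
    (zig₁ : (ρ_ J).inv ≫ (J ◁ e) ≫ (α_ J Jbar J).inv ≫ (d₂ ▷ J) ≫ (λ_ J).hom = 𝟙 J)
    (zig₂ : (λ_ Jbar).inv ≫ (e ▷ Jbar) ≫ (α_ Jbar J Jbar).hom ≫ (Jbar ◁ d₂) ≫ (ρ_ Jbar).hom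
        = 𝟙 Jbar)
    (zag₁ : (λ_ J).inv ≫ (eps ▷ J) ≫ (α_ J Jbar J).hom ≫ (J ◁ η) ≫ (ρ_ J).hom = 𝟙 J)
    (zag₂ : (ρ_ Jbar).inv ≫ (Jbar ◁ eps) ≫ (α_ Jbar J Jbar).inv ≫ (η ▷ Jbar) ≫ (λ_ Jbar).hom
        = 𝟙 Jbar)
    (hdJ : dim J = dim Jbar) (hdJ0 : dim J ≠ 0)
    -- the unit 1-morphisms are simple:
    (hIda : ∀ f : 𝟙 a ⟶ 𝟙 a, ∃ c : F, f = c • 𝟙 (𝟙 a))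
    (hIdb : ∀ f : 𝟙 b ⟶ 𝟙 b, ∃ c : F, f = c • 𝟙 (𝟙 b))
    -- representatives of the simple 1-morphisms of `End(A)` and of `Hom(B,A)`:
    (m n : ℕ) (X : Fin m → (a ⟶ a)) (Y : Fin n → (b ⟶ a))
    (hXsimple : ∀ i (f : X i ⟶ X i), ∃ c : F, f = c • 𝟙 (X i))
    (hYsimple : ∀ k (f : Y k ⟶ Y k), ∃ c : F, f = c • 𝟙 (Y k))
    (hXdisj : ∀ i j, i ≠ j → ∀ f : X i ⟶ X j, f = 0)
    (hYdisj : ∀ k l, k ≠ l → ∀ f : Y k ⟶ Y l, f = 0)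
    -- semisimplicity: every 1-morphism decomposes into the given simples:
    (hdecX : ∀ Z : a ⟶ a, ∃ (N : ℕ) (c : Fin N → Fin m)
        (u : ∀ p, X (c p) ⟶ Z) (u' : ∀ p, Z ⟶ X (c p)),
        (∑ p, u' p ≫ u p) = 𝟙 Z ∧ (∀ p, u p ≫ u' p = 𝟙 (X (c p))) ∧
        (∀ p q, p ≠ q → u p ≫ u' q = 0))
    (hdecY : ∀ Z : b ⟶ a, ∃ (N : ℕ) (c : Fin N → Fin n)
        (u : ∀ p, Y (c p) ⟶ Z) (u' : ∀ p, Z ⟶ Y (c p)),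
        (∑ p, u' p ≫ u p) = 𝟙 Z ∧ (∀ p, u p ≫ u' p = 𝟙 (Y (c p))) ∧
        (∀ p q, p ≠ q → u p ≫ u' q = 0)) :
    (∑ i, dim (X i) ^ 2) = ∑ k, dim (Y k) ^ 2 := by
  classical
  have dim_zero : ∀ {x y : B} (Z : x ⟶ y), 𝟙 Z = 0 → dim Z = 0 := by
    intro x y Z h
    have := hdadd Z 0 (fun p => p.elim0) (fun p => p.elim0) (fun p => p.elim0)
      (by simp [h]) (fun p => p.elim0) (fun p q _ => p.elim0)
    simpa using this
  choose N c u u' hsum1 hid1 horth1 using fun i => hdecY (J ≫ X i)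
  choose M e' v v' hsum2 hid2 horth2 using fun k => hdecX (Jbar ≫ Y k)
  have hA : ∀ i, dim J * dim (X i)
      = ∑ k, (Fintype.card {p : Fin (N i) // c i p = k} : F) * dim (Y k) := by
    intro i
    have h1 : dim (J ≫ X i) = ∑ p, dim (Y (c i p)) :=
      hdadd _ _ _ (u i) (u' i) (hsum1 i) (hid1 i) (horth1 i)
    rw [← hdmul, h1, ← Fintype.sum_fiberwise' (c i) (fun k => dim (Y k))]
    refine Finset.sum_congr rfl fun k _ => ?_
    rw [Finset.sum_const, Finset.card_univ, nsmul_eq_mul]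
  have hB : ∀ k, dim J * dim (Y k)
      = ∑ i, (Fintype.card {q : Fin (M k) // e' k q = i} : F) * dim (X i) := by
    intro k
    have h1 : dim (Jbar ≫ Y k) = ∑ q, dim (X (e' k q)) :=
      hdadd _ _ _ (v k) (v' k) (hsum2 k) (hid2 k) (horth2 k)
    rw [hdJ, ← hdmul, h1, ← Fintype.sum_fiberwise' (e' k) (fun i => dim (X i))]
    refine Finset.sum_congr rfl fun i _ => ?_
    rw [Finset.sum_const, Finset.card_univ, nsmul_eq_mul]
  have hmult : ∀ i k, 𝟙 (X i) ≠ 0 → 𝟙 (Y k) ≠ 0 →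
      (Fintype.card {p : Fin (N i) // c i p = k})
        = Fintype.card {q : Fin (M k) // e' k q = i} := by
    intro i k hXi hYk
    obtain ⟨A⟩ := hom_from_simple (F := F) Y k (hYsimple k) (fun l => hYdisj k l) hYk
      (J ≫ X i) (N i) (c i) (u i) (u' i) (hsum1 i) (hid1 i) (horth1 i)
    obtain ⟨Bq⟩ := hom_into_simple (F := F) X i (hXsimple i) (fun l h => hXdisj l i h) hXi
      (Jbar ≫ Y k) (M k) (e' k) (v k) (v' k) (hsum2 k) (hid2 k) (horth2 k)
    let φ : (Y k ⟶ J ≫ X i) ≃ₗ[F] ((Jbar ≫ Y k) ⟶ X i) := {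
      toFun := fun f => (Jbar ◁ f) ≫ (α_ Jbar J (X i)).inv ≫ (η ▷ X i) ≫ (λ_ (X i)).hom
      map_add' := fun f g => by rw [hwl]; simp [Preadditive.add_comp]
      map_smul' := fun t f => by rw [RingHom.id_apply, hwl']; simp [CategoryTheory.Linear.smul_comp]
      invFun := fun g => (λ_ (Y k)).inv ≫ (eps ▷ Y k) ≫ (α_ J Jbar (Y k)).hom ≫ (J ◁ g)
      left_inv := fun f => my_psi_phi J Jbar eps η zag₁ f
      right_inv := fun g => my_phi_psi J Jbar eps η zag₂ g }
    have hc := LinearEquiv.finrank_eq ((A.symm.trans φ).trans Bq)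
    simpa [Module.finrank_pi] using hc
  have key : dim J * (∑ i, dim (X i) ^ 2) = dim J * (∑ k, dim (Y k) ^ 2) := by
    rw [Finset.mul_sum, Finset.mul_sum]
    calc ∑ i, dim J * dim (X i) ^ 2
        = ∑ i, ∑ k, dim (X i) *
            ((Fintype.card {p : Fin (N i) // c i p = k} : F) * dim (Y k)) := by
          refine Finset.sum_congr rfl fun i _ => ?_
          rw [pow_two, show dim J * (dim (X i) * dim (X i))
            = dim (X i) * (dim J * dim (X i)) by ring, hA i, Finset.mul_sum]
      _ = ∑ k, ∑ i, dim (X i) *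
            ((Fintype.card {p : Fin (N i) // c i p = k} : F) * dim (Y k)) :=
          Finset.sum_comm
      _ = ∑ k, ∑ i, dim (Y k) *
            ((Fintype.card {q : Fin (M k) // e' k q = i} : F) * dim (X i)) := by
          refine Finset.sum_congr rfl fun k _ => Finset.sum_congr rfl fun i _ => ?_
          by_cases hX0 : dim (X i) = 0
          · rw [hX0]; ring
          by_cases hY0 : dim (Y k) = 0
          · rw [hY0]; ring
          rw [hmult i k (fun h => hX0 (dim_zero _ h)) (fun h => hY0 (dim_zero _ h))]
          ring
      _ = ∑ k, dim J * dim (Y k) ^ 2 := by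
          refine Finset.sum_congr rfl fun k _ => ?_
          rw [← Finset.mul_sum, ← hB k, pow_two]
          ring
  exact mul_left_cancel₀ hdJ0 key
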